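/- arXiv:1307.7971 — 4 statements merged into one kernel-verified Lean document; each statement's English description precedes it below -/
import Mathlib

section
/- Let n ≥ 1, a > 0, m a positive integer, and let V : ℝⁿ → ℝ be given by V(q) = a|q|^{2m}. Then for every h > 0 there exist T > 0 and a non-constant C² function q : ℝ → ℝⁿ with q(t+T) = q(t) for all t, such that q̈(t) + ∇V(q(t)) = 0 and (1/2)|q̇(t)|² + V(q(t)) = h for all t ∈ ℝ. -/
open scoped RealInnerProductSpace

section OscAux
open Real ContinuousLinearMap

noncomputable def shearEquiv (A B : ℝ) (hB : B ≠ 0) : (ℝ × ℝ) ≃L[ℝ] (ℝ × ℝ) :=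
  LinearEquiv.toContinuousLinearEquiv
    { toFun := fun p => (p.1, A * p.1 + B * p.2)
      invFun := fun q => (q.1, (q.2 - A * q.1) / B)
      map_add' := fun p q => by ext <;> dsimp <;> ring
      map_smul' := fun c p => by ext <;> dsimp <;> ring
      left_inv := fun p => by ext <;> dsimp <;> field_simp <;> ring
      right_inv := fun q => by ext <;> dsimp <;> field_simp <;> ring }

noncomputable def oscG (a : ℝ) (k : ℕ) (θ y : ℝ) : ℝ :=
  y ^ 2 * sin θ ^ 2 / 2 + a * y ^ (2 * k + 2) * cos θ ^ (2 * k + 2)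

lemma oscG_mono (a : ℝ) (ha : 0 < a) (k : ℕ) (θ : ℝ) ⦃y₁ y₂ : ℝ⦄
    (h0 : 0 ≤ y₁) (h12 : y₁ < y₂) : oscG a k θ y₁ < oscG a k θ y₂ := by
  have h2 : y₁ ^ 2 < y₂ ^ 2 := by nlinarith
  have hp : y₁ ^ (2 * k + 2) < y₂ ^ (2 * k + 2) :=
    pow_lt_pow_left₀ h12 h0 (by omega)
  have hc1 : cos θ ^ (2 * k + 2) = (cos θ ^ (k + 1)) ^ 2 := by ring
  have hcnn : (0 : ℝ) ≤ cos θ ^ (2 * k + 2) := hc1 ▸ sq_nonneg _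
  have hpyth := sin_sq_add_cos_sq θ
  rcases eq_or_ne (sin θ) 0 with hs0 | hs0
  · have hc : cos θ ^ 2 = 1 := by nlinarith
    have hc2 : cos θ ^ (2 * k + 2) = 1 := by
      rw [show 2 * k + 2 = 2 * (k + 1) by ring, pow_mul, hc, one_pow]
    simp only [oscG, hs0, hc2]
    nlinarith
  · have hs2 : 0 < sin θ ^ 2 := by positivity
    simp only [oscG]
    nlinarith [mul_le_mul_of_nonneg_right (mul_le_mul_of_nonneg_left hp.le ha.le) hcnn]

lemma oscG_exists (a : ℝ) (ha : 0 < a) (k : ℕ) (h : ℝ) (hh : 0 < h) (θ : ℝ) :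
    ∃ y, 0 < y ∧ oscG a k θ y = h := by
  have hc1 : cos θ ^ (2 * k + 2) = (cos θ ^ (k + 1)) ^ 2 := by ring
  have hcnn : (0 : ℝ) ≤ cos θ ^ (2 * k + 2) := hc1 ▸ sq_nonneg _
  have hpyth := sin_sq_add_cos_sq θ
  have hδ : 0 < sin θ ^ 2 / 2 + a * cos θ ^ (2 * k + 2) := by
    rcases eq_or_ne (sin θ) 0 with hs0 | hs0
    · have hc : cos θ ^ 2 = 1 := by nlinarith
      have hc2 : cos θ ^ (2 * k + 2) = 1 := by
        rw [show 2 * k + 2 = 2 * (k + 1) by ring, pow_mul, hc, one_pow]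
      rw [hs0, hc2]; nlinarith
    · have hs2 : 0 < sin θ ^ 2 := by positivity
      nlinarith [mul_nonneg ha.le hcnn]
  set δ := sin θ ^ 2 / 2 + a * cos θ ^ (2 * k + 2) with hδdef
  set R := max 1 (Real.sqrt (h / δ)) with hRdef
  have hR1 : (1 : ℝ) ≤ R := le_max_left _ _
  have hR0 : (0 : ℝ) ≤ R := le_trans zero_le_one hR1
  have hR2 : h / δ ≤ R ^ 2 := by
    have h1 : Real.sqrt (h / δ) ^ 2 = h / δ := Real.sq_sqrt (div_pos hh hδ).le
    have h2 : Real.sqrt (h / δ) ^ 2 ≤ R ^ 2 :=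
      pow_le_pow_left₀ (Real.sqrt_nonneg _) (le_max_right _ _) 2
    linarith
  have hgR : h ≤ oscG a k θ R := by
    have hRp : R ^ 2 ≤ R ^ (2 * k + 2) := pow_le_pow_right₀ hR1 (by omega)
    have hhR : h ≤ R ^ 2 * δ := by
      rw [div_le_iff₀ hδ] at hR2; linarith
    have : R ^ 2 * δ ≤ oscG a k θ R := by
      simp only [oscG, hδdef]
      nlinarith [mul_le_mul_of_nonneg_right (mul_le_mul_of_nonneg_left hRp ha.le) hcnn]
    linarith
  have hcont : ContinuousOn (oscG a k θ) (Set.Icc 0 R) := by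
    apply Continuous.continuousOn; unfold oscG; fun_prop
  have h0 : oscG a k θ 0 = 0 := by simp [oscG]
  have hmem : h ∈ Set.Icc (oscG a k θ 0) (oscG a k θ R) := by
    rw [h0]; exact ⟨hh.le, hgR⟩
  obtain ⟨y, hyI, hyv⟩ := intermediate_value_Icc hR0 hcont hmem
  refine ⟨y, ?_, hyv⟩
  rcases eq_or_lt_of_le hyI.1 with rfl | hy0
  · rw [h0] at hyv; exact absurd hyv.symm hh.ne'
  · exact hy0

lemma oscG_hasFDerivAt (a : ℝ) (k : ℕ) (θ₀ y₀ : ℝ) :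
    HasFDerivAt (fun p : ℝ × ℝ => oscG a k p.1 p.2)
      ((y₀ ^ 2 * sin θ₀ * cos θ₀
          - (2 * k + 2) * a * y₀ ^ (2 * k + 2) * cos θ₀ ^ (2 * k + 1) * sin θ₀) • fst ℝ ℝ ℝ
        + (y₀ * sin θ₀ ^ 2
          + (2 * k + 2) * a * y₀ ^ (2 * k + 1) * cos θ₀ ^ (2 * k + 2)) • snd ℝ ℝ ℝ)
      (θ₀, y₀) := by
  have hfst : HasFDerivAt (fun p : ℝ × ℝ => p.1) (fst ℝ ℝ ℝ) (θ₀, y₀) := hasFDerivAt_fst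
  have hsnd : HasFDerivAt (fun p : ℝ × ℝ => p.2) (snd ℝ ℝ ℝ) (θ₀, y₀) := hasFDerivAt_snd
  have hsin : HasFDerivAt (fun p : ℝ × ℝ => sin p.1) (cos θ₀ • fst ℝ ℝ ℝ) (θ₀, y₀) :=
    by have := (Real.hasDerivAt_sin θ₀).comp_hasFDerivAt (θ₀, y₀) hfst; exact this
  have hcos : HasFDerivAt (fun p : ℝ × ℝ => cos p.1) ((-sin θ₀) • fst ℝ ℝ ℝ) (θ₀, y₀) :=
    by have := (Real.hasDerivAt_cos θ₀).comp_hasFDerivAt (θ₀, y₀) hfst; exact this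
  have hsin2 : HasFDerivAt (fun p : ℝ × ℝ => sin p.1 ^ 2)
      (((2 : ℕ) * sin θ₀ ^ 1) • (cos θ₀ • fst ℝ ℝ ℝ)) (θ₀, y₀) := by
    have := (hasDerivAt_pow 2 (sin θ₀)).comp_hasFDerivAt (θ₀, y₀) hsin
    simpa [Function.comp_def] using this
  have hcosp : HasFDerivAt (fun p : ℝ × ℝ => cos p.1 ^ (2 * k + 2))
      ((((2 * k + 2 : ℕ)) * cos θ₀ ^ (2 * k + 1)) • ((-sin θ₀) • fst ℝ ℝ ℝ)) (θ₀, y₀) := by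
    have := (hasDerivAt_pow (2 * k + 2) (cos θ₀)).comp_hasFDerivAt (θ₀, y₀) hcos
    simpa [Function.comp_def] using this
  have hy2 : HasFDerivAt (fun p : ℝ × ℝ => p.2 ^ 2)
      (((2 : ℕ) * y₀ ^ 1) • snd ℝ ℝ ℝ) (θ₀, y₀) := by
    have := (hasDerivAt_pow 2 y₀).comp_hasFDerivAt (θ₀, y₀) hsnd
    simpa [Function.comp_def] using this
  have hyp : HasFDerivAt (fun p : ℝ × ℝ => p.2 ^ (2 * k + 2))
      (((2 * k + 2 : ℕ) * y₀ ^ (2 * k + 1)) • snd ℝ ℝ ℝ) (θ₀, y₀) := by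
    have := (hasDerivAt_pow (2 * k + 2) y₀).comp_hasFDerivAt (θ₀, y₀) hsnd
    simpa [Function.comp_def] using this
  have H := (((hy2.mul hsin2).const_mul ((2:ℝ)⁻¹)).add (((hyp.const_mul a)).mul hcosp))
  have heq : (fun p : ℝ × ℝ => oscG a k p.1 p.2)
      = fun p : ℝ × ℝ => (2:ℝ)⁻¹ * (p.2 ^ 2 * sin p.1 ^ 2)
          + a * p.2 ^ (2 * k + 2) * cos p.1 ^ (2 * k + 2) := by
    funext p; unfold oscG; ring
  rw [heq]
  refine H.congr_fderiv ?_
  refine ContinuousLinearMap.ext fun p => ?_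
  simp only [add_apply, smul_apply, coe_fst', coe_snd', smul_eq_mul]
  push_cast
  ring

lemma oscG_unique (a : ℝ) (ha : 0 < a) (k : ℕ) (h : ℝ)
    (r : ℝ → ℝ) (hrpos : ∀ θ, 0 < r θ) (hrval : ∀ θ, oscG a k θ (r θ) = h)
    (θ : ℝ) (y : ℝ) (hy : 0 < y) (hyv : oscG a k θ y = h) : y = r θ := by
  rcases lt_trichotomy y (r θ) with hlt | heq | hgt
  · have := oscG_mono a ha k θ hy.le hlt
    rw [hyv, hrval θ] at this; exact absurd this (lt_irrefl _)
  · exact heq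
  · have := oscG_mono a ha k θ (hrpos θ).le hgt
    rw [hyv, hrval θ] at this; exact absurd this (lt_irrefl _)

lemma osc_r_diff (a : ℝ) (ha : 0 < a) (k : ℕ) (h : ℝ) (hh : 0 < h)
    (r : ℝ → ℝ) (hrpos : ∀ θ, 0 < r θ) (hrval : ∀ θ, oscG a k θ (r θ) = h) (θ₀ : ℝ) :
    DifferentiableAt ℝ r θ₀ := by
  set y₀ := r θ₀ with hy₀
  have hy₀pos : 0 < y₀ := hrpos θ₀
  set B := y₀ * sin θ₀ ^ 2 + (2 * k + 2) * a * y₀ ^ (2 * k + 1) * cos θ₀ ^ (2 * k + 2) with hBdef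
  set A := y₀ ^ 2 * sin θ₀ * cos θ₀
      - (2 * k + 2) * a * y₀ ^ (2 * k + 2) * cos θ₀ ^ (2 * k + 1) * sin θ₀ with hAdef
  have hpyth := sin_sq_add_cos_sq θ₀
  have hBpos : 0 < B := by
    rcases eq_or_ne (cos θ₀) 0 with hc0 | hc0
    · have hs2 : sin θ₀ ^ 2 = 1 := by nlinarith
      have hcp : cos θ₀ ^ (2 * k + 2) = 0 := by
        rw [hc0]; exact zero_pow (by omega)
      rw [hBdef, hs2, hcp]; simpa using hy₀pos
    · have h1 : 0 < cos θ₀ ^ (2 * k + 2) := by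
        have : cos θ₀ ^ (2 * k + 2) = (cos θ₀ ^ (k + 1)) ^ 2 := by ring
        rw [this]; positivity
      have h2 : 0 < y₀ ^ (2 * k + 1) := pow_pos hy₀pos _
      have h3 : (0:ℝ) < 2 * k + 2 := by positivity
      have h4 : 0 ≤ y₀ * sin θ₀ ^ 2 := by positivity
      nlinarith [mul_pos (mul_pos (mul_pos h3 ha) h2) h1]
  set Gmap := fun p : ℝ × ℝ => (p.1, oscG a k p.1 p.2) with hGdef
  have hcd : ContDiffAt ℝ 1 Gmap (θ₀, y₀) := by
    apply ContDiff.contDiffAt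
    refine contDiff_fst.prodMk ?_
    have : (fun p : ℝ × ℝ => oscG a k p.1 p.2) = fun p : ℝ × ℝ =>
        p.2 ^ 2 * sin p.1 ^ 2 / 2 + a * p.2 ^ (2 * k + 2) * cos p.1 ^ (2 * k + 2) := rfl
    rw [this]
    exact (((contDiff_snd.pow 2).mul ((Real.contDiff_sin.comp contDiff_fst).pow 2)).div_const 2).add
      ((contDiff_const.mul (contDiff_snd.pow _)).mul ((Real.contDiff_cos.comp contDiff_fst).pow _))
  have hasGmap : HasFDerivAt Gmap ((shearEquiv A B hBpos.ne') : (ℝ × ℝ) →L[ℝ] (ℝ × ℝ)) (θ₀, y₀) := by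
    have h1 := (hasFDerivAt_fst (𝕜 := ℝ) (p := (θ₀, y₀)) (E := ℝ) (F := ℝ)).prodMk
      (oscG_hasFDerivAt a k θ₀ y₀)
    refine h1.congr_fderiv ?_
    refine ContinuousLinearMap.ext fun p => ?_
    have hs : (shearEquiv A B hBpos.ne' : (ℝ × ℝ) →L[ℝ] (ℝ × ℝ)) p = (p.1, A * p.1 + B * p.2) := by
      simp [shearEquiv]
    rw [hs]
    simp only [ContinuousLinearMap.prod_apply, add_apply, smul_apply, coe_fst', coe_snd',
      smul_eq_mul]
    rfl
  have hstrict := hcd.hasStrictFDerivAt' hasGmap one_ne_zero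
  have himg : Gmap (θ₀, y₀) = (θ₀, h) := by
    simp only [hGdef]; rw [hrval θ₀]
  set inv := hstrict.localInverse Gmap _ _ with hinvdef
  set ρ : ℝ → ℝ := fun θ => (inv (θ, h)).2 with hρdef
  have hpaird : DifferentiableAt ℝ (fun θ : ℝ => ((θ : ℝ), h)) θ₀ :=
    differentiableAt_id.prodMk (differentiableAt_const h)
  have hinvd : DifferentiableAt ℝ inv (θ₀, h) := by
    have := hstrict.to_localInverse.differentiableAt
    rwa [himg] at this
  have hρdiff : DifferentiableAt ℝ ρ θ₀ := (hinvd.comp θ₀ hpaird).snd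
  have hρcont : ContinuousAt ρ θ₀ := hρdiff.continuousAt
  have hρθ₀ : ρ θ₀ = y₀ := by
    have := hstrict.localInverse_apply_image
    rw [himg] at this
    show (inv (θ₀, h)).2 = y₀
    rw [hinvdef, this]
  have hev : r =ᶠ[nhds θ₀] ρ := by
    have h1 : ∀ᶠ p in nhds (θ₀, h), Gmap (inv p) = p := by
      have := hstrict.eventually_right_inverse
      rwa [himg] at this
    have hpairc : Filter.Tendsto (fun θ : ℝ => ((θ : ℝ), h)) (nhds θ₀) (nhds (θ₀, h)) := by
      have : ContinuousAt (fun θ : ℝ => ((θ : ℝ), h)) θ₀ := hpaird.continuousAt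
      exact this
    have h2 : ∀ᶠ θ in nhds θ₀, Gmap (inv (θ, h)) = (θ, h) := hpairc.eventually h1
    have h3 : ∀ᶠ θ in nhds θ₀, 0 < ρ θ :=
      hρcont.eventually (eventually_gt_nhds (hρθ₀ ▸ hy₀pos))
    filter_upwards [h2, h3] with θ hG hpos
    have h1c : (inv (θ, h)).1 = θ := congrArg Prod.fst hG
    have h2c : oscG a k (inv (θ, h)).1 (inv (θ, h)).2 = h := congrArg Prod.snd hG
    rw [h1c] at h2c
    exact (oscG_unique a ha k h r hrpos hrval θ (ρ θ) hpos h2c).symm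
  exact hρdiff.congr_of_eventuallyEq hev

lemma scalar_osc (a : ℝ) (ha : 0 < a) (k : ℕ) (h : ℝ) (hh : 0 < h) :
    ∃ (T : ℝ) (x v : ℝ → ℝ), 0 < T ∧ (∃ t₁ t₂, x t₁ ≠ x t₂) ∧
      (∀ t, x (t + T) = x t) ∧
      (∀ t, HasDerivAt x (v t) t) ∧
      (∀ t, HasDerivAt v (-(2 * (k + 1) * a * x t ^ (2 * k + 1))) t) ∧
      (∀ t, v t ^ 2 / 2 + a * x t ^ (2 * k + 2) = h) := by
  obtain ⟨r, hrpos, hrval⟩ : ∃ r : ℝ → ℝ, (∀ θ, 0 < r θ) ∧ ∀ θ, oscG a k θ (r θ) = h := by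
    choose r h1 h2 using oscG_exists a ha k h hh
    exact ⟨r, h1, h2⟩
  have hrdiff : ∀ θ, DifferentiableAt ℝ r θ := osc_r_diff a ha k h hh r hrpos hrval
  have hrcont : Continuous r := continuous_iff_continuousAt.2 fun θ => (hrdiff θ).continuousAt
  have hrper : ∀ θ, r (θ + 2 * π) = r θ := by
    intro θ
    refine oscG_unique a ha k h r hrpos hrval θ _ (hrpos _) ?_
    have := hrval (θ + 2 * π)
    unfold oscG at this ⊢
    rwa [sin_add_two_pi, cos_add_two_pi] at this
  set c : ℝ := 2 * (k + 1) * a with hcdef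
  have hcpos : 0 < c := by positivity
  set Ψ : ℝ → ℝ := fun θ => c * r θ ^ (2 * k) * cos θ ^ (2 * k + 2) + sin θ ^ 2 with hΨdef
  have hΨcont : Continuous Ψ :=
    ((continuous_const.mul (hrcont.pow _)).mul (Real.continuous_cos.pow _)).add
      (Real.continuous_sin.pow 2)
  have hΨpos : ∀ θ, 0 < Ψ θ := by
    intro θ
    have hpyth := sin_sq_add_cos_sq θ
    have hrp : 0 < r θ ^ (2 * k) := pow_pos (hrpos θ) _
    rcases eq_or_ne (sin θ) 0 with hs | hs
    · have hc2 : cos θ ^ 2 = 1 := by nlinarith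
      have hcp : cos θ ^ (2 * k + 2) = 1 := by
        rw [show 2 * k + 2 = 2 * (k + 1) by ring, pow_mul, hc2, one_pow]
      simp only [hΨdef, hs, hcp]
      nlinarith
    · have hs2 : 0 < sin θ ^ 2 := by positivity
      have hcp : (0:ℝ) ≤ cos θ ^ (2 * k + 2) := by
        have : cos θ ^ (2 * k + 2) = (cos θ ^ (k + 1)) ^ 2 := by ring
        rw [this]; positivity
      simp only [hΨdef]
      nlinarith [mul_nonneg (mul_nonneg hcpos.le hrp.le) hcp]
  have hΨper : ∀ θ, Ψ (θ + 2 * π) = Ψ θ := by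
    intro θ; simp only [hΨdef, hrper θ, sin_add_two_pi, cos_add_two_pi]
  obtain ⟨κ, M, hκ, hM, hbd⟩ : ∃ κ M : ℝ, 0 < κ ∧ 0 < M ∧ ∀ θ, κ ≤ Ψ θ ∧ Ψ θ ≤ M := by
    have hcpt : IsCompact (Set.Icc (0:ℝ) (2 * π)) := isCompact_Icc
    have hne : (Set.Icc (0:ℝ) (2 * π)).Nonempty := ⟨0, le_refl 0, by positivity⟩
    obtain ⟨θ₁, hθ₁, hmin⟩ := hcpt.exists_isMinOn hne hΨcont.continuousOn
    obtain ⟨θ₂, hθ₂, hmax⟩ := hcpt.exists_isMaxOn hne hΨcont.continuousOn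
    refine ⟨Ψ θ₁, Ψ θ₂, hΨpos θ₁, hΨpos θ₂, ?_⟩
    intro θ
    have hper : Function.Periodic Ψ (2 * π) := hΨper
    obtain ⟨y, hy, hyeq⟩ := hper.exists_mem_Ico₀ (by positivity) θ
    rw [hyeq]
    exact ⟨hmin (Set.Ico_subset_Icc_self hy), hmax (Set.Ico_subset_Icc_self hy)⟩
  have hΨinv_cont : Continuous fun s => -(Ψ s)⁻¹ :=
    (hΨcont.inv₀ fun s => (hΨpos s).ne').neg
  set τ : ℝ → ℝ := fun θ => ∫ s in (0:ℝ)..θ, -(Ψ s)⁻¹ with hτdef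
  have hint : ∀ α β : ℝ, IntervalIntegrable (fun s => -(Ψ s)⁻¹) MeasureTheory.volume α β :=
    fun α β => hΨinv_cont.intervalIntegrable α β
  have hτderiv : ∀ b, HasDerivAt τ (-(Ψ b)⁻¹) b := fun b =>
    intervalIntegral.integral_hasDerivAt_right (hint 0 b)
      (hΨinv_cont.stronglyMeasurableAtFilter _ _) hΨinv_cont.continuousAt
  have hτcont : Continuous τ := continuous_iff_continuousAt.2 fun b => (hτderiv b).continuousAt
  have hτ0 : τ 0 = 0 := intervalIntegral.integral_same
  have hub : ∀ θ₁ θ₂ : ℝ, θ₁ ≤ θ₂ → τ θ₂ - τ θ₁ ≤ -((θ₂ - θ₁) * M⁻¹) := by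
    intro θ₁ θ₂ h12
    have hadd := intervalIntegral.integral_add_adjacent_intervals (hint 0 θ₁) (hint θ₁ θ₂)
    have hmono : ∫ s in θ₁..θ₂, -(Ψ s)⁻¹ ≤ ∫ s in θ₁..θ₂, (fun _ => -M⁻¹) s := by
      apply intervalIntegral.integral_mono_on h12 (hint θ₁ θ₂) intervalIntegrable_const
      intro s _
      have h1 := (hbd s).2
      have h2 : M⁻¹ ≤ (Ψ s)⁻¹ := by
        apply inv_anti₀ (hΨpos s) h1
      linarith
    rw [intervalIntegral.integral_const, smul_eq_mul] at hmono
    have heq : τ θ₂ - τ θ₁ = ∫ s in θ₁..θ₂, -(Ψ s)⁻¹ := by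
      simp only [hτdef]; linarith [hadd]
    rw [heq]; nlinarith
  have hτanti : StrictAnti τ := by
    intro θ₁ θ₂ h12
    have := hub θ₁ θ₂ h12.le
    have hpos : 0 < (θ₂ - θ₁) * M⁻¹ := by
      apply mul_pos (by linarith) (inv_pos.2 hM)
    linarith
  have hτsurj : Function.Surjective τ := by
    intro t
    set b := M * (|t| + 1) with hbdef
    have hb0 : 0 < b := by positivity
    have h1 : τ b ≤ -(|t| + 1) := by
      have := hub 0 b hb0.le
      rw [hτ0] at this
      have : b * M⁻¹ = |t| + 1 := by rw [hbdef]; field_simp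
      nlinarith [hub 0 b hb0.le]
    have h2 : |t| + 1 ≤ τ (-b) := by
      have := hub (-b) 0 (by linarith)
      rw [hτ0] at this
      have hbM : (0 - -b) * M⁻¹ = |t| + 1 := by rw [hbdef]; field_simp; ring
      nlinarith [hub (-b) 0 (by linarith : -b ≤ (0:ℝ))]
    have hmem : t ∈ Set.Icc (τ b) (τ (-b)) := by
      constructor
      · have := abs_nonneg t; have := neg_abs_le t; linarith
      · have := le_abs_self t; linarith
    obtain ⟨θ, _, hθ⟩ := intermediate_value_Icc' (by linarith : -b ≤ b) hτcont.continuousOn hmem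
    exact ⟨θ, hθ⟩
  have hτinj : Function.Injective τ := hτanti.injective
  set e : ℝ ≃o ℝ := StrictMono.orderIsoOfSurjective (fun θ => -τ θ)
    (fun θ₁ θ₂ h12 => by simpa using hτanti h12)
    (fun t => by obtain ⟨θ, hθ⟩ := hτsurj (-t); exact ⟨θ, by simp [hθ]⟩) with hedef
  set θfun : ℝ → ℝ := fun t => e.symm (-t) with hθfdef
  have hτθ : ∀ t, τ (θfun t) = t := by
    intro t
    have h1 : e (e.symm (-t)) = -t := e.apply_symm_apply (-t)
    have h2 : e (e.symm (-t)) = -τ (e.symm (-t)) := rfl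
    rw [h2] at h1
    have := neg_injective h1
    simpa [hθfdef] using this
  have hθτ : ∀ θ, θfun (τ θ) = θ := fun θ => hτinj (hτθ (τ θ))
  have hθcont : Continuous θfun := by
    have h1 : Continuous (e.symm : ℝ → ℝ) := (OrderIso.toHomeomorph e.symm).continuous
    exact h1.comp continuous_neg
  have hθderiv : ∀ t, HasDerivAt θfun (-Ψ (θfun t)) t := by
    intro t
    have h1 : HasDerivAt τ (-(Ψ (θfun t))⁻¹) (θfun t) := hτderiv (θfun t)
    have h2 : (-(Ψ (θfun t))⁻¹) ≠ 0 := by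
      simp only [ne_eq, neg_eq_zero, inv_eq_zero]
      exact (hΨpos _).ne'
    have h3 := HasDerivAt.of_local_left_inverse hθcont.continuousAt h1 h2
      (Filter.Eventually.of_forall hτθ)
    have h4 : (-(Ψ (θfun t))⁻¹)⁻¹ = -Ψ (θfun t) := by
      rw [inv_neg, inv_inv]
    rwa [h4] at h3
  set T : ℝ := τ (-(2 * π)) with hTdef
  have hTpos : 0 < T := by
    have h1 : -(2 * π) < 0 := neg_lt_zero.mpr (by positivity)
    have := hτanti h1
    rw [hτ0] at this
    exact this
  have hshift : ∀ θ, τ (θ - 2 * π) = τ θ + T := by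
    have hFd : ∀ θ : ℝ, HasDerivAt (fun u => τ (u - 2 * π) - τ u) 0 θ := by
      intro θ
      have h1 : HasDerivAt (fun u : ℝ => u - 2 * π) 1 θ := (hasDerivAt_id θ).sub_const _
      have h2 : HasDerivAt (fun u : ℝ => τ (u - 2 * π)) (-(Ψ (θ - 2 * π))⁻¹ * 1) θ :=
        by have := (hτderiv (θ - 2 * π)).comp θ h1; exact this
      have h4 : Ψ (θ - 2 * π) = Ψ θ := by
        have h0 := hΨper (θ - 2 * π); rw [sub_add_cancel] at h0; exact h0.symm
      have h5 := h2.sub (hτderiv θ)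
      have h6 : -(Ψ (θ - 2 * π))⁻¹ * 1 - -(Ψ θ)⁻¹ = 0 := by rw [h4]; ring
      rwa [h6] at h5
    have hconst := is_const_of_deriv_eq_zero
      (fun u => ((hFd u).differentiableAt : DifferentiableAt ℝ _ u)) (fun u => (hFd u).deriv)
    intro θ
    have := hconst θ 0
    rw [zero_sub, hτ0, sub_zero] at this
    have hT : τ (0 - 2 * π) = T := by rw [zero_sub]
    linarith [this, hT]
  have hθshift : ∀ t, θfun (t + T) = θfun t - 2 * π := by
    intro t
    apply hτinj
    rw [hτθ, hshift, hτθ]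
  have hrper' : ∀ θ, r (θ - 2 * π) = r θ := by
    intro θ; have h0 := hrper (θ - 2 * π); rw [sub_add_cancel] at h0; exact h0.symm
  set x : ℝ → ℝ := fun t => r (θfun t) * cos (θfun t) with hxdef
  set v : ℝ → ℝ := fun t => r (θfun t) * sin (θfun t) with hvdef
  have hxper : ∀ t, x (t + T) = x t := by
    intro t
    show r (θfun (t + T)) * cos (θfun (t + T)) = _
    rw [hθshift t, hrper', Real.cos_sub_two_pi]
  have energy : ∀ t, v t ^ 2 / 2 + a * x t ^ (2 * k + 2) = h := by
    intro t
    have hgv := hrval (θfun t)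
    unfold oscG at hgv
    show (r (θfun t) * sin (θfun t)) ^ 2 / 2 + a * (r (θfun t) * cos (θfun t)) ^ (2 * k + 2) = h
    rw [mul_pow, mul_pow]
    linarith [hgv]
  have hnonconst : ∃ t₁ t₂, x t₁ ≠ x t₂ := by
    refine ⟨τ 0, τ π, ?_⟩
    have h1 : x (τ 0) = r 0 := by
      show r (θfun (τ 0)) * cos (θfun (τ 0)) = _
      rw [hθτ 0, Real.cos_zero, mul_one]
    have h2 : x (τ π) = -r π := by
      show r (θfun (τ π)) * cos (θfun (τ π)) = _
      rw [hθτ π, Real.cos_pi]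
      ring
    rw [h1, h2]
    have := hrpos 0
    have := hrpos π
    intro hcon
    linarith [hcon]
  have hxv : ∀ t, HasDerivAt x (v t) t ∧
      HasDerivAt v (-(c * x t ^ (2 * k + 1))) t := by
    intro t
    set θt := θfun t with hθtdef
    have hθ : HasDerivAt θfun (-Ψ θt) t := hθderiv t
    have hRd : HasDerivAt (fun u => r (θfun u)) (deriv r θt * -Ψ θt) t :=
      ((hrdiff θt).hasDerivAt).comp t hθ
    have hCd : HasDerivAt (fun u => cos (θfun u)) (-sin θt * -Ψ θt) t :=
      by have := (Real.hasDerivAt_cos θt).comp t hθ; exact this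
    have hSd : HasDerivAt (fun u => sin (θfun u)) (cos θt * -Ψ θt) t :=
      by have := (Real.hasDerivAt_sin θt).comp t hθ; exact this
    have hx' : HasDerivAt x
        (deriv r θt * -Ψ θt * cos θt + r θt * (-sin θt * -Ψ θt)) t := hRd.mul hCd
    have hv' : HasDerivAt v
        (deriv r θt * -Ψ θt * sin θt + r θt * (cos θt * -Ψ θt)) t := hRd.mul hSd
    have hxt : x t = r θt * cos θt := rfl
    have hvt : v t = r θt * sin θt := rfl
    have hΨt : Ψ θt = c * r θt ^ (2 * k) * cos θt ^ (2 * k + 2) + sin θt ^ 2 := rfl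
    have hpyth : sin θt ^ 2 + cos θt ^ 2 = 1 := sin_sq_add_cos_sq θt
    have h3 := ((hv'.pow 2).div_const 2).add ((hx'.pow (2 * k + 2)).const_mul a)
    simp only [Pi.add_def, Pi.pow_apply, energy] at h3
    have hzero := h3.unique (hasDerivAt_const t h)
    have hee : 2 * k + 2 - 1 = 2 * k + 1 := by omega
    rw [hee] at hzero
    push_cast at hzero
    rw [hxt, hvt] at hzero
    norm_num at hzero
    have e1 : (r θt * sin θt) * (deriv r θt * -Ψ θt * sin θt + r θt * (cos θt * -Ψ θt))
        + c * (r θt * cos θt) ^ (2 * k + 1)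
          * (deriv r θt * -Ψ θt * cos θt + r θt * (-sin θt * -Ψ θt)) = 0 := by
      rw [hcdef]
      linear_combination hzero
    have e2 : (r θt * cos θt) * (deriv r θt * -Ψ θt * sin θt + r θt * (cos θt * -Ψ θt))
        - (r θt * sin θt) * (deriv r θt * -Ψ θt * cos θt + r θt * (-sin θt * -Ψ θt))
        + (c * (r θt * cos θt) ^ (2 * k + 2) + (r θt * sin θt) ^ 2) = 0 := by
      linear_combination (-(r θt ^ 2 * Ψ θt)) * hpyth + (-(r θt ^ 2)) * hΨt
    have hΔpos : 0 < c * (r θt * cos θt) ^ (2 * k + 2) + (r θt * sin θt) ^ 2 := by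
      have h2 : c * (r θt * cos θt) ^ (2 * k + 2) + (r θt * sin θt) ^ 2
          = r θt ^ 2 * Ψ θt := by rw [hΨt]; ring
      rw [h2]; exact mul_pos (pow_pos (hrpos _) 2) (hΨpos θt)
    have key1 : ((deriv r θt * -Ψ θt * cos θt + r θt * (-sin θt * -Ψ θt)) - r θt * sin θt)
        * (c * (r θt * cos θt) ^ (2 * k + 2) + (r θt * sin θt) ^ 2) = 0 := by
      linear_combination (r θt * cos θt) * e1 - (r θt * sin θt) * e2
    have hfin1 : (deriv r θt * -Ψ θt * cos θt + r θt * (-sin θt * -Ψ θt))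
        = r θt * sin θt := by
      rcases mul_eq_zero.1 key1 with hk | hk
      · exact sub_eq_zero.1 hk
      · exact absurd hk hΔpos.ne'
    have key2 : ((deriv r θt * -Ψ θt * sin θt + r θt * (cos θt * -Ψ θt))
          + c * (r θt * cos θt) ^ (2 * k + 1))
        * (c * (r θt * cos θt) ^ (2 * k + 2) + (r θt * sin θt) ^ 2) = 0 := by
      linear_combination (c * (r θt * cos θt) ^ (2 * k + 1)) * e2 + (r θt * sin θt) * e1
    have hfin2 : (deriv r θt * -Ψ θt * sin θt + r θt * (cos θt * -Ψ θt))
        = -(c * (r θt * cos θt) ^ (2 * k + 1)) := by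
      rcases mul_eq_zero.1 key2 with hk | hk
      · linarith [hk]
      · exact absurd hk hΔpos.ne'
    constructor
    · have := hfin1 ▸ hx'
      exact this
    · have := hfin2 ▸ hv'
      have h9 : -(c * (r θt * cos θt) ^ (2 * k + 1)) = -(c * x t ^ (2 * k + 1)) := by
        rw [hxt]
      rw [h9] at this
      exact this
  refine ⟨T, x, v, hTpos, hnonconst, hxper, fun t => (hxv t).1, fun t => ?_, energy⟩
  have := (hxv t).2
  rw [hcdef] at this
  exact this

end OscAux

/-- Corollary 1.5: for `V(q) = a|q|^(2m)` with `a > 0`, the system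
`q̈ + ∇V(q) = 0`, `(1/2)|q̇|² + V(q) = h` has a non-constant periodic
solution for every energy `h > 0`. -/
theorem periodic_solution_power_potential
    (n : ℕ) (hn : 1 ≤ n) (a : ℝ) (ha : 0 < a) (m : ℕ) (hm : 1 ≤ m)
    (V : EuclideanSpace ℝ (Fin n) → ℝ)
    (hVdef : ∀ q, V q = a * ‖q‖ ^ (2 * m))
    (h : ℝ) (hh : 0 < h) :
    ∃ (T : ℝ) (q : ℝ → EuclideanSpace ℝ (Fin n)),
      0 < T ∧ ContDiff ℝ 2 q ∧ (∃ t₁ t₂, q t₁ ≠ q t₂) ∧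
      (∀ t, q (t + T) = q t) ∧
      (∀ t, deriv (deriv q) t + gradient V (q t) = 0) ∧
      (∀ t, (1 / 2) * ‖deriv q t‖ ^ 2 + V (q t) = h) := by
  obtain ⟨k, rfl⟩ : ∃ k, m = k + 1 := ⟨m - 1, by omega⟩
  obtain ⟨T, x, v, hT, hnc, hper, hd1, hd2, hen⟩ := scalar_osc a ha k h hh
  set i : Fin n := ⟨0, hn⟩ with hidef
  set E₀ : EuclideanSpace ℝ (Fin n) := EuclideanSpace.single i 1 with hE₀
  have hE₀norm : ‖E₀‖ = 1 := by rw [hE₀, EuclideanSpace.norm_single]; norm_num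
  have hE₀inner : ⟪E₀, E₀⟫ = 1 := by
    rw [real_inner_self_eq_norm_sq, hE₀norm]; norm_num
  have hE₀ne : E₀ ≠ 0 := by
    intro hcon
    rw [hcon, norm_zero] at hE₀norm
    norm_num at hE₀norm
  set q : ℝ → EuclideanSpace ℝ (Fin n) := fun t => x t • E₀ with hq
  have hgrad : ∀ z : EuclideanSpace ℝ (Fin n),
      HasGradientAt V ((2 * (k + 1) * a * ⟪z, z⟫ ^ k) • z) z := by
    intro z
    have hVeq : V = fun w => a * ⟪w, w⟫ ^ (k + 1) := by
      funext w
      rw [hVdef w, real_inner_self_eq_norm_sq, ← pow_mul]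
    rw [hVeq, hasGradientAt_iff_hasFDerivAt]
    have hid := hasFDerivAt_id (𝕜 := ℝ) z
    have hinner : HasFDerivAt (fun w : EuclideanSpace ℝ (Fin n) => (⟪w, w⟫ : ℝ))
        ((fderivInnerCLM ℝ (z, z)).comp
          ((ContinuousLinearMap.id ℝ _).prod (ContinuousLinearMap.id ℝ _))) z := hid.inner ℝ hid
    have hpow : HasFDerivAt (fun w : EuclideanSpace ℝ (Fin n) => (⟪w, w⟫ : ℝ) ^ (k + 1))
        ((((k + 1 : ℕ) : ℝ) * ⟪z, z⟫ ^ k) • ((fderivInnerCLM ℝ (z, z)).comp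
          ((ContinuousLinearMap.id ℝ _).prod (ContinuousLinearMap.id ℝ _)))) z := by
      have := (hasDerivAt_pow (k + 1) (⟪z, z⟫ : ℝ)).comp_hasFDerivAt_of_eq z hinner rfl
      simpa [Function.comp_def] using this
    have hfinal := hpow.const_mul a
    refine hfinal.congr_fderiv ?_
    refine ContinuousLinearMap.ext fun w => ?_
    simp only [ContinuousLinearMap.smul_apply, ContinuousLinearMap.coe_comp', Function.comp_apply,
      ContinuousLinearMap.prod_apply, ContinuousLinearMap.coe_id', id_eq, fderivInnerCLM_apply,
      InnerProductSpace.toDual_apply_apply, smul_eq_mul, real_inner_smul_left]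
    rw [real_inner_comm w z]
    push_cast
    ring
  have hq1 : ∀ t, HasDerivAt q (v t • E₀) t := fun t => (hd1 t).smul_const E₀
  have hderivq : deriv q = fun t => v t • E₀ := funext fun t => (hq1 t).deriv
  have hq2 : ∀ t, HasDerivAt (fun u => v u • E₀) ((-(2 * (k + 1) * a * x t ^ (2 * k + 1))) • E₀) t :=
    fun t => (hd2 t).smul_const E₀
  have hderiv2 : ∀ t, deriv (deriv q) t = (-(2 * (k + 1) * a * x t ^ (2 * k + 1))) • E₀ := by
    intro t; rw [hderivq]; exact (hq2 t).deriv
  have hqinner : ∀ t, ⟪q t, q t⟫ = x t ^ 2 := by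
    intro t
    show ⟪x t • E₀, x t • E₀⟫ = _
    rw [real_inner_smul_left, real_inner_smul_right, hE₀inner]
    ring
  have hgq : ∀ t, gradient V (q t) = (2 * (k + 1) * a * x t ^ (2 * k + 1)) • E₀ := by
    intro t
    rw [(hgrad (q t)).gradient, hqinner t]
    show (2 * (k + 1) * a * (x t ^ 2) ^ k) • (x t • E₀) = _
    rw [smul_smul]
    congr 1
    rw [← pow_mul]
    ring
  have hxc : Continuous x := continuous_iff_continuousAt.2 fun t => (hd1 t).continuousAt
  have hcd : ContDiff ℝ 2 q := by
    have hdx : deriv x = v := funext fun t => (hd1 t).deriv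
    have hdv : deriv v = fun t => -(2 * (k + 1) * a * x t ^ (2 * k + 1)) :=
      funext fun t => (hd2 t).deriv
    have hx2 : ContDiff ℝ 2 x := by
      rw [show (2 : WithTop ℕ∞) = 1 + 1 by norm_num, contDiff_succ_iff_deriv]
      refine ⟨fun t => (hd1 t).differentiableAt, by simp, ?_⟩
      rw [hdx, contDiff_one_iff_deriv]
      exact ⟨fun t => (hd2 t).differentiableAt,
        by rw [hdv]; exact (continuous_const.mul (hxc.pow _)).neg⟩
    exact hx2.smul contDiff_const
  refine ⟨T, q, hT, hcd, ?_, ?_, ?_, ?_⟩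
  · obtain ⟨t₁, t₂, hne⟩ := hnc
    refine ⟨t₁, t₂, fun hcon => hne ?_⟩
    have : x t₁ • E₀ = x t₂ • E₀ := hcon
    exact smul_left_injective ℝ hE₀ne this
  · intro t
    show x (t + T) • E₀ = x t • E₀
    rw [hper t]
  · intro t
    rw [hderiv2 t, hgq t, ← add_smul]
    simp
  · intro t
    rw [hVdef (q t)]
    simp only [hderivq]
    rw [norm_smul, hE₀norm, mul_one]
    have h1 : ‖q t‖ = |x t| := by
      show ‖x t • E₀‖ = _
      rw [norm_smul, hE₀norm, mul_one, Real.norm_eq_abs]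
    rw [h1]
    have h2 : |x t| ^ (2 * (k + 1)) = x t ^ (2 * (k + 1)) := by
      rw [← abs_pow, abs_of_nonneg]
      rw [pow_mul]
      exact pow_nonneg (sq_nonneg _) _
    rw [h2]
    have h3 : ‖v t‖ ^ 2 = v t ^ 2 := by rw [Real.norm_eq_abs, sq_abs]
    rw [h3]
    have := hen t
    rw [show 2 * (k + 1) = 2 * k + 2 by ring]
    linarith
end

section
/- Let V : ℝⁿ → ℝ be C², h ∈ ℝ, and let u : ℝ → ℝⁿ be a non-constant C² function with period 1 satisfying: (i) ∫₀¹ [V(u(t)) + (1/2)⟨∇V(u(t)), u(t)⟩] dt = h; (ii) ü(t) + T² ∇V(u(t)) = 0 for all t, where T > 0 is defined by 1/T² = (∫₀¹ ⟨∇V(u(t)), u(t)⟩ dt)/(∫₀¹ |u̇(t)|² dt), assuming both integrals are positive. Then the function q(t) := u(t/T) is a non-constant T-periodic C² solution of q̈(t) + ∇V(q(t)) = 0 satisfying the energy identity (1/2)|q̇(t)|² + V(q(t)) = h for all t ∈ ℝ. -/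
open scoped RealInnerProductSpace

/-- Lemma 2.1 (rescaling step): if `u` is a non-constant 1-periodic solution of
`ü + T²∇V(u) = 0` lying on the constraint `∫₀¹ [V(u) + (1/2)⟨∇V(u),u⟩] = h`,
with `1/T² = (∫₀¹⟨∇V(u),u⟩)/(∫₀¹|u̇|²)`, then `q(t) = u(t/T)` is a non-constant
`T`-periodic solution of `q̈ + ∇V(q) = 0` with energy `h`. -/
theorem rescaled_solution_has_energy_h
    (n : ℕ) (V : EuclideanSpace ℝ (Fin n) → ℝ) (hV : ContDiff ℝ 2 V) (h : ℝ)
    (u : ℝ → EuclideanSpace ℝ (Fin n)) (hu : ContDiff ℝ 2 u)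
    (hnc : ∃ t₁ t₂, u t₁ ≠ u t₂)
    (hper : ∀ t, u (t + 1) = u t)
    (hK : 0 < ∫ t in (0:ℝ)..1, ‖deriv u t‖ ^ 2)
    (hP : 0 < ∫ t in (0:ℝ)..1, ⟪gradient V (u t), u t⟫)
    (hcon : ∫ t in (0:ℝ)..1, (V (u t) + (1 / 2) * ⟪gradient V (u t), u t⟫) = h)
    (T : ℝ) (hT : 0 < T)
    (hTdef : 1 / T ^ 2 = (∫ t in (0:ℝ)..1, ⟪gradient V (u t), u t⟫) /
      (∫ t in (0:ℝ)..1, ‖deriv u t‖ ^ 2))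
    (hODE : ∀ t, deriv (deriv u) t + T ^ 2 • gradient V (u t) = 0) :
    ContDiff ℝ 2 (fun t => u (t / T)) ∧
    (∃ t₁ t₂, u (t₁ / T) ≠ u (t₂ / T)) ∧
    (∀ t, u ((t + T) / T) = u (t / T)) ∧
    (∀ t, deriv (deriv (fun s => u (s / T))) t + gradient V (u (t / T)) = 0) ∧
    (∀ t, (1 / 2) * ‖deriv (fun s => u (s / T)) t‖ ^ 2 + V (u (t / T)) = h) := by
  have hT0 : T ≠ 0 := ne_of_gt hT
  have huD : Differentiable ℝ u := hu.differentiable (by norm_num)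
  have hu1 : ContDiff ℝ 1 (deriv u) :=
    (contDiff_succ_iff_deriv.mp (show ContDiff ℝ (1+1) u by exact_mod_cast hu)).2.2
  have hu'D : Differentiable ℝ (deriv u) := hu1.differentiable (by norm_num)
  have hVD : Differentiable ℝ V := hV.differentiable (by norm_num)
  have hdivT : ∀ t : ℝ, HasDerivAt (fun s : ℝ => s / T) T⁻¹ t := fun t => by
    simpa using (hasDerivAt_id t).div_const T
  have hq' : ∀ t, HasDerivAt (fun s => u (s / T)) (T⁻¹ • deriv u (t / T)) t := fun t =>
    (huD (t / T)).hasDerivAt.scomp t (hdivT t)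
  have hq'eq : (deriv fun s => u (s / T)) = fun t => T⁻¹ • deriv u (t / T) :=
    funext fun t => (hq' t).deriv
  have hq'' : ∀ t, HasDerivAt (deriv fun s => u (s / T))
      (T⁻¹ • (T⁻¹ • deriv (deriv u) (t / T))) t := by
    intro t
    rw [hq'eq]
    exact (((hu'D (t / T)).hasDerivAt).const_smul (T⁻¹)).scomp t (hdivT t)
  have hq''eq : ∀ t, deriv (deriv fun s => u (s / T)) t = - gradient V (u (t / T)) := by
    intro t
    rw [(hq'' t).deriv]
    have h1 : deriv (deriv u) (t / T) = -(T ^ 2 • gradient V (u (t / T))) := by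
      have h0 := hODE (t / T)
      have : deriv (deriv u) (t / T) = -(T ^ 2 • gradient V (u (t / T))) := by
        rw [eq_neg_iff_add_eq_zero]; exact h0
      exact this
    rw [h1, smul_neg, smul_neg, smul_smul, smul_smul]
    congr 1
    have : T⁻¹ * T⁻¹ * T ^ 2 = 1 := by field_simp
    rw [this, one_smul]
  -- gradient facts
  have hgradF : ∀ x, HasFDerivAt V ((InnerProductSpace.toDual ℝ _) (gradient V x)) x :=
    fun x => ((hVD x).hasGradientAt).hasFDerivAt
  -- energy function
  set E : ℝ → ℝ := fun t => (1 / 2) * ‖deriv (fun s => u (s / T)) t‖ ^ 2 + V (u (t / T))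
    with hEdef
  have hE0 : ∀ t, HasDerivAt E 0 t := by
    intro t
    have hB : HasDerivAt (fun t => V (u (t / T)))
        (⟪gradient V (u (t / T)), T⁻¹ • deriv u (t / T)⟫) t := by
      have := (hgradF (u (t / T))).comp_hasDerivAt t (hq' t)
      simpa only [InnerProductSpace.toDual_apply_apply, Function.comp_def] using this
    have hA : HasDerivAt (fun t => ⟪deriv (fun s => u (s / T)) t, deriv (fun s => u (s / T)) t⟫)
        (⟪deriv (fun s => u (s / T)) t, T⁻¹ • (T⁻¹ • deriv (deriv u) (t / T))⟫ +
         ⟪T⁻¹ • (T⁻¹ • deriv (deriv u) (t / T)), deriv (fun s => u (s / T)) t⟫) t :=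
      (hq'' t).inner ℝ (hq'' t)
    have hA' : HasDerivAt (fun t => (1 / 2) * ‖deriv (fun s => u (s / T)) t‖ ^ 2)
        ((1 / 2) * (⟪deriv (fun s => u (s / T)) t, T⁻¹ • (T⁻¹ • deriv (deriv u) (t / T))⟫ +
         ⟪T⁻¹ • (T⁻¹ • deriv (deriv u) (t / T)), deriv (fun s => u (s / T)) t⟫)) t := by
      have : (fun t => (1 / 2) * ‖deriv (fun s => u (s / T)) t‖ ^ 2) =
          fun t => (1 / 2) * ⟪deriv (fun s => u (s / T)) t, deriv (fun s => u (s / T)) t⟫ := by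
        funext t; rw [real_inner_self_eq_norm_sq]
      rw [this]
      exact hA.const_mul (1 / 2)
    have hsum := hA'.add hB
    have key : T⁻¹ • (T⁻¹ • deriv (deriv u) (t / T)) = - gradient V (u (t / T)) := by
      have := hq''eq t; rw [← (hq'' t).deriv]; exact this
    have : (1 / 2) * (⟪deriv (fun s => u (s / T)) t, T⁻¹ • (T⁻¹ • deriv (deriv u) (t / T))⟫ +
         ⟪T⁻¹ • (T⁻¹ • deriv (deriv u) (t / T)), deriv (fun s => u (s / T)) t⟫) +
         ⟪gradient V (u (t / T)), T⁻¹ • deriv u (t / T)⟫ = 0 := by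
      rw [key, hq'eq]
      simp only [inner_neg_left, inner_neg_right]
      rw [real_inner_comm (T⁻¹ • deriv u (t / T)) (gradient V (u (t / T)))]
      ring
    rw [← this]
    exact hsum
  have hEconst : ∀ t, E t = E 0 := by
    intro t
    exact is_const_of_deriv_eq_zero (fun x => (hE0 x).differentiableAt)
      (fun x => (hE0 x).deriv) t 0
  -- continuity facts for integrability
  have hcontu' : Continuous (deriv u) := hu1.continuous
  have hcontu : Continuous u := hu.continuous
  have hcontV : Continuous V := hV.continuous
  have hcontgrad : Continuous (gradient V) := by
    have h1 : Continuous (fderiv ℝ V) := hV.continuous_fderiv (by norm_num)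
    exact ((InnerProductSpace.toDual ℝ (EuclideanSpace ℝ (Fin n))).symm.continuous).comp h1
  have hint1 : IntervalIntegrable (fun s => ‖deriv u s‖ ^ 2) MeasureTheory.volume 0 1 :=
    ((hcontu'.norm).pow 2).intervalIntegrable 0 1
  have hint2 : IntervalIntegrable (fun s => V (u s)) MeasureTheory.volume 0 1 :=
    (hcontV.comp hcontu).intervalIntegrable 0 1
  have hint3 : IntervalIntegrable (fun s => ⟪gradient V (u s), u s⟫) MeasureTheory.volume 0 1 :=
    ((hcontgrad.comp hcontu).inner hcontu).intervalIntegrable 0 1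
  -- E(T*s) pointwise
  have hEc : ∀ s : ℝ, (T⁻¹ ^ 2 / 2) * ‖deriv u s‖ ^ 2 + V (u s) = E 0 := by
    intro s
    have hsT : T * s / T = s := by field_simp
    have h2 : deriv (fun s => u (s / T)) (T * s) = T⁻¹ • deriv u s := by
      rw [hq'eq]; show T⁻¹ • deriv u (T * s / T) = _; rw [hsT]
    have h1 : E (T * s) = E 0 := hEconst (T * s)
    have h3 : E (T * s) = (1 / 2) * ‖T⁻¹ • deriv u s‖ ^ 2 + V (u s) := by
      show (1 / 2) * ‖deriv (fun s => u (s / T)) (T * s)‖ ^ 2 + V (u (T * s / T)) = _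
      rw [h2, hsT]
    rw [← h1, h3, norm_smul, Real.norm_eq_abs, abs_of_pos (by positivity : (0:ℝ) < T⁻¹),
      mul_pow]
    ring
  -- integrate the constant identity
  have hE0val : E 0 = (T⁻¹ ^ 2 / 2) * (∫ s in (0:ℝ)..1, ‖deriv u s‖ ^ 2) +
      ∫ s in (0:ℝ)..1, V (u s) := by
    have hL : ∫ s in (0:ℝ)..1, ((T⁻¹ ^ 2 / 2) * ‖deriv u s‖ ^ 2 + V (u s)) = E 0 := by
      rw [intervalIntegral.integral_congr (g := fun _ => E 0) (fun s _ => hEc s),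
        intervalIntegral.integral_const]
      norm_num
    rw [← hL, intervalIntegral.integral_add (hint1.const_mul _) hint2,
      intervalIntegral.integral_const_mul]
  -- split the constraint integral
  have hconsplit : (∫ s in (0:ℝ)..1, V (u s)) +
      (1 / 2) * (∫ s in (0:ℝ)..1, ⟪gradient V (u s), u s⟫) = h := by
    rw [← hcon, intervalIntegral.integral_add hint2 (hint3.const_mul _),
      intervalIntegral.integral_const_mul]
  -- relation T⁻² K = P
  have hKP : T⁻¹ ^ 2 * (∫ s in (0:ℝ)..1, ‖deriv u s‖ ^ 2) =
      ∫ s in (0:ℝ)..1, ⟪gradient V (u s), u s⟫ := by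
    have hKne : (∫ s in (0:ℝ)..1, ‖deriv u s‖ ^ 2) ≠ 0 := ne_of_gt hK
    field_simp at hTdef ⊢
    linarith [hTdef]
  have hEh : E 0 = h := by
    rw [hE0val, ← hconsplit]
    have : (T⁻¹ ^ 2 / 2) * (∫ s in (0:ℝ)..1, ‖deriv u s‖ ^ 2) =
        (1 / 2) * (∫ s in (0:ℝ)..1, ⟪gradient V (u s), u s⟫) := by
      rw [← hKP]; ring
    rw [this]; ring
  refine ⟨hu.comp (contDiff_id.div_const T), ?_, ?_, ?_, ?_⟩
  · obtain ⟨t₁, t₂, hne⟩ := hnc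
    exact ⟨t₁ * T, t₂ * T, by
      rwa [mul_div_cancel_right₀ _ hT0, mul_div_cancel_right₀ _ hT0]⟩
  · intro t
    have : (t + T) / T = t / T + 1 := by field_simp
    rw [this, hper]
  · intro t
    rw [hq''eq t]; simp
  · intro t
    have : E t = h := by rw [hEconst t, hEh]
    exact this
end

section
/- Let V : ℝⁿ → ℝ be C¹ with ⟨∇V(q), q⟩ ≥ μ₁V(q) − μ₂ for all q, where μ₁ > 0, μ₂ ≥ 0, and let h > μ₂/μ₁. Let (uₙ) be a sequence of C¹ 1-periodic functions uₙ : ℝ → ℝⁿ each satisfying the constraint ∫₀¹ [V(uₙ(t)) + (1/2)⟨∇V(uₙ(t)), uₙ(t)⟩] dt = h, and suppose the sequence f(uₙ) = (1/4)(∫₀¹ |u̇ₙ(t)|² dt)(∫₀¹ ⟨∇V(uₙ(t)), uₙ(t)⟩ dt) converges to some c ∈ ℝ. Then the sequence ∫₀¹ |u̇ₙ(t)|² dt is bounded. -/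
open Filter
open scoped RealInnerProductSpace

/-- Boundedness step of the Palais–Smale condition (Claim 3.1): if
`⟨∇V(q),q⟩ ≥ μ₁V(q) - μ₂`, `h > μ₂/μ₁`, each `uₖ` is a C¹ 1-periodic function
on the constraint `∫₀¹ [V(uₖ) + (1/2)⟨∇V(uₖ),uₖ⟩] dt = h`, and
`f(uₖ) = (1/4)(∫₀¹|u̇ₖ|²)(∫₀¹⟨∇V(uₖ),uₖ⟩)` converges, then the Dirichlet
integrals `∫₀¹ |u̇ₖ|² dt` are bounded. -/
theorem dirichlet_integrals_bounded
    (n : ℕ) (V : EuclideanSpace ℝ (Fin n) → ℝ) (hV : ContDiff ℝ 1 V)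
    (μ₁ μ₂ : ℝ) (hμ₁ : 0 < μ₁) (hμ₂ : 0 ≤ μ₂)
    (hV4 : ∀ q, ⟪gradient V q, q⟫ ≥ μ₁ * V q - μ₂)
    (h : ℝ) (hh : μ₂ / μ₁ < h)
    (u : ℕ → ℝ → EuclideanSpace ℝ (Fin n))
    (hu : ∀ k, ContDiff ℝ 1 (u k))
    (hper : ∀ k t, u k (t + 1) = u k t)
    (hcon : ∀ k,
      ∫ t in (0:ℝ)..1, (V (u k t) + (1 / 2) * ⟪gradient V (u k t), u k t⟫) = h)
    (c : ℝ)
    (hf : Tendsto (fun k =>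
      (1 / 4) * (∫ t in (0:ℝ)..1, ‖deriv (u k) t‖ ^ 2) *
        (∫ t in (0:ℝ)..1, ⟪gradient V (u k t), u k t⟫)) atTop (nhds c)) :
    ∃ C : ℝ, ∀ k, ∫ t in (0:ℝ)..1, ‖deriv (u k) t‖ ^ 2 ≤ C := by
  -- continuity of the gradient
  have hgrad : Continuous (gradient V) := by
    have : Continuous (fun x => (InnerProductSpace.toDual ℝ
        (EuclideanSpace ℝ (Fin n))).symm (fderiv ℝ V x)) :=
      (InnerProductSpace.toDual ℝ _).symm.continuous.comp
        (hV.continuous_fderiv one_ne_zero)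
    exact this
  set A : ℕ → ℝ := fun k => ∫ t in (0:ℝ)..1, ⟪gradient V (u k t), u k t⟫ with hA
  set D : ℕ → ℝ := fun k => ∫ t in (0:ℝ)..1, ‖deriv (u k) t‖ ^ 2 with hD
  have hcontA : ∀ k, Continuous (fun t => ⟪gradient V (u k t), u k t⟫) :=
    fun k => Continuous.inner (hgrad.comp (hu k).continuous) (hu k).continuous
  have hcontV : ∀ k, Continuous (fun t => V (u k t)) :=
    fun k => hV.continuous.comp (hu k).continuous
  -- lower bound for A k
  set a : ℝ := (μ₁ * h - μ₂) / (1 + μ₁ / 2) with ha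
  have ha0 : 0 < a := by
    apply div_pos
    · have := (div_lt_iff₀ hμ₁).mp hh; linarith
    · linarith
  have hAa : ∀ k, a ≤ A k := by
    intro k
    have hsplit : (∫ t in (0:ℝ)..1, (V (u k t) + (1 / 2) * ⟪gradient V (u k t), u k t⟫))
        = (∫ t in (0:ℝ)..1, V (u k t)) + (1/2) * A k := by
      rw [intervalIntegral.integral_add (f := fun t => V (u k t)) (g := fun t => (1 / 2 : ℝ) * ⟪gradient V (u k t), u k t⟫) ((hcontV k).intervalIntegrable 0 1)
        ((continuous_const.mul (hcontA k)).intervalIntegrable 0 1),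
        intervalIntegral.integral_const_mul]
    have hVle : (∫ t in (0:ℝ)..1, V (u k t))
        ≤ ∫ t in (0:ℝ)..1, (⟪gradient V (u k t), u k t⟫ + μ₂) / μ₁ := by
      apply intervalIntegral.integral_mono_on (by norm_num)
        ((hcontV k).intervalIntegrable 0 1)
        ((((hcontA k).add continuous_const).div_const μ₁).intervalIntegrable 0 1)
      intro t _
      rw [le_div_iff₀ hμ₁]
      simp only [Pi.add_apply]
      have := hV4 (u k t)
      linarith
    have hVval : (∫ t in (0:ℝ)..1, (⟪gradient V (u k t), u k t⟫ + μ₂) / μ₁)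
        = (A k + μ₂) / μ₁ := by
      simp_rw [div_eq_mul_inv, intervalIntegral.integral_mul_const,
        intervalIntegral.integral_add ((hcontA k).intervalIntegrable 0 1)
          (intervalIntegrable_const)]
      simp [hA]
    have hcon' := hcon k
    rw [hsplit] at hcon'
    rw [hVval] at hVle
    -- h = ∫V + A/2 ≤ (A+μ₂)/μ₁ + A/2
    have h1 : h ≤ (A k + μ₂) / μ₁ + (1/2) * A k := by linarith
    have h2 : μ₁ * h ≤ μ₁ * ((A k + μ₂) / μ₁ + (1/2) * A k) :=
      mul_le_mul_of_nonneg_left h1 hμ₁.le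
    rw [mul_add, mul_div_cancel₀ _ hμ₁.ne'] at h2
    rw [ha, div_le_iff₀ (by linarith : (0:ℝ) < 1 + μ₁ / 2)]
    nlinarith
  have hD0 : ∀ k, 0 ≤ D k := fun k =>
    intervalIntegral.integral_nonneg (by norm_num) (fun t _ => by positivity)
  obtain ⟨M, hM⟩ := hf.bddAbove_range
  refine ⟨4 * M / a, fun k => ?_⟩
  have hMk : (1/4) * D k * A k ≤ M := hM ⟨k, rfl⟩
  rw [le_div_iff₀ ha0]
  nlinarith [hAa k, hD0 k, hMk]
end

section
/- Let V : ℝⁿ → ℝ be C¹ with ⟨∇V(q), q⟩ > 0 for all q ≠ 0, let μ₁ > 0, μ₂ ≥ 0 with μ₁V(0) ≤ μ₂, and let h > μ₂/μ₁. Let u : ℝ → ℝⁿ be a C¹ 1-periodic function satisfying u(t + 1/2) = −u(t) for all t and the constraint ∫₀¹ [V(u(t)) + (1/2)⟨∇V(u(t)), u(t)⟩] dt = h. Then (1/4)(∫₀¹ |u̇(t)|² dt)(∫₀¹ ⟨∇V(u(t)), u(t)⟩ dt) > 0. -/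
open scoped RealInnerProductSpace

/-- Claim 3.4: on the symmetric constraint set, the functional
`f(u) = (1/4)(∫₀¹|u̇|²)(∫₀¹⟨∇V(u),u⟩)` is strictly positive: if
`⟨∇V(q),q⟩ > 0` for `q ≠ 0`, `μ₁V(0) ≤ μ₂`, `h > μ₂/μ₁`, and `u` is a C¹
1-periodic antiperiodic (`u(t+1/2) = -u(t)`) function with
`∫₀¹ [V(u) + (1/2)⟨∇V(u),u⟩] dt = h`, then `f(u) > 0`. -/
theorem f_positive_on_symmetric_constraint
    (n : ℕ) (V : EuclideanSpace ℝ (Fin n) → ℝ) (hV : ContDiff ℝ 1 V)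
    (hV2 : ∀ q : EuclideanSpace ℝ (Fin n), q ≠ 0 → 0 < ⟪gradient V q, q⟫)
    (μ₁ μ₂ : ℝ) (hμ₁ : 0 < μ₁) (hμ₂ : 0 ≤ μ₂)
    (hV0 : μ₁ * V 0 ≤ μ₂)
    (h : ℝ) (hh : μ₂ / μ₁ < h)
    (u : ℝ → EuclideanSpace ℝ (Fin n)) (hu : ContDiff ℝ 1 u)
    (hper : ∀ t, u (t + 1) = u t)
    (hanti : ∀ t, u (t + 1 / 2) = -u t)
    (hcon : ∫ t in (0:ℝ)..1, (V (u t) + (1 / 2) * ⟪gradient V (u t), u t⟫) = h) :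
    0 < (1 / 4) * (∫ t in (0:ℝ)..1, ‖deriv u t‖ ^ 2) *
      (∫ t in (0:ℝ)..1, ⟪gradient V (u t), u t⟫) := by
  have huc : Continuous u := hu.continuous
  have hud : Differentiable ℝ u := hu.differentiable one_ne_zero
  have hperiodic : Function.Periodic u 1 := hper
  -- V 0 ≤ μ₂ / μ₁ < h
  have hV0h : V 0 < h := lt_of_le_of_lt ((le_div_iff₀ hμ₁).mpr (by linarith [mul_comm μ₁ (V 0)])) hh
  -- u is not identically 0
  have hne : ∃ t, u t ≠ 0 := by
    by_contra hz
    push_neg at hz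
    have : (∫ t in (0:ℝ)..1, (V (u t) + (1 / 2) * ⟪gradient V (u t), u t⟫)) = V 0 := by
      have : ∀ t, (V (u t) + (1 / 2) * ⟪gradient V (u t), u t⟫) = V 0 := by
        intro t; rw [hz t]; simp
      simp only [this, intervalIntegral.integral_const, smul_eq_mul]
      ring
    rw [this] at hcon
    linarith
  obtain ⟨t₀, ht₀⟩ := hne
  -- a point in [0,1] where u ≠ 0
  have hs : ∃ s ∈ Set.Icc (0:ℝ) 1, u s ≠ 0 := by
    refine ⟨Int.fract t₀, ⟨Int.fract_nonneg t₀, (Int.fract_lt_one t₀).le⟩, ?_⟩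
    have : u (Int.fract t₀) = u t₀ := by
      have h2 := hperiodic.sub_int_mul_eq (x := t₀) ⌊t₀⌋
      rw [mul_one] at h2
      exact h2
    rw [this]; exact ht₀
  obtain ⟨s, hsmem, hus⟩ := hs
  -- continuity of the gradient
  have hgrad : Continuous fun q => gradient V q := by
    have h1 : Continuous fun q => fderiv ℝ V q := hV.continuous_fderiv one_ne_zero
    have : (fun q => gradient V q) =
        (fun q => (InnerProductSpace.toDual ℝ (EuclideanSpace ℝ (Fin n))).symm (fderiv ℝ V q)) := by
      funext q; rfl
    rw [this]
    exact (InnerProductSpace.toDual ℝ _).symm.continuous.comp h1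
  have hgc : Continuous fun t => ⟪gradient V (u t), u t⟫ :=
    (hgrad.comp huc).inner huc
  -- the integrand ⟪∇V(u),u⟫ is nonnegative
  have hgnn : ∀ t, 0 ≤ ⟪gradient V (u t), u t⟫ := by
    intro t
    by_cases hq : u t = 0
    · rw [hq]; simp
    · exact (hV2 _ hq).le
  -- second factor positive
  have hI2 : 0 < ∫ t in (0:ℝ)..1, ⟪gradient V (u t), u t⟫ := by
    apply intervalIntegral.integral_pos one_pos hgc.continuousOn
    · exact fun x _ => hgnn x
    · exact ⟨s, hsmem, hV2 _ hus⟩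
  -- deriv u is continuous
  have hdc : Continuous (deriv u) := hu.continuous_deriv le_rfl
  -- deriv u is not identically 0
  have hdne : ∃ t, deriv u t ≠ 0 := by
    by_contra hz
    push_neg at hz
    have hconst : ∀ t, u t = u 0 := fun t => is_const_of_deriv_eq_zero hud hz t 0
    have h1 : u (0 + 1 / 2) = -u 0 := hanti 0
    rw [hconst (0 + 1 / 2)] at h1
    have hu0 : u 0 = 0 := by
      have h2 : (2:ℝ) • u 0 = 0 := by
        rw [two_smul]; nth_rewrite 1 [h1]; simp
      simpa using (smul_eq_zero.mp h2).resolve_left (by norm_num)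
    exact ht₀ (by rw [hconst t₀, hu0])
  obtain ⟨t₁, ht₁⟩ := hdne
  -- deriv u is also periodic
  have hdper : Function.Periodic (deriv u) 1 := by
    have heq : (fun t => u (t + 1)) = u := funext hper
    intro x
    calc deriv u (x + 1) = deriv (fun t => u (t + 1)) x := (deriv_comp_add_const u 1 x).symm
      _ = deriv u x := by rw [heq]
  -- a point in [0,1] where deriv u ≠ 0
  have hds : ∃ s ∈ Set.Icc (0:ℝ) 1, deriv u s ≠ 0 := by
    refine ⟨Int.fract t₁, ⟨Int.fract_nonneg t₁, (Int.fract_lt_one t₁).le⟩, ?_⟩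
    have : deriv u (Int.fract t₁) = deriv u t₁ := by
      have h2 := hdper.sub_int_mul_eq (x := t₁) ⌊t₁⌋
      rw [mul_one] at h2
      exact h2
    rw [this]; exact ht₁
  obtain ⟨s₁, hs₁mem, hds₁⟩ := hds
  -- first factor positive
  have hI1 : 0 < ∫ t in (0:ℝ)..1, ‖deriv u t‖ ^ 2 := by
    apply intervalIntegral.integral_pos one_pos
    · exact ((hdc.norm).pow 2).continuousOn
    · exact fun x _ => sq_nonneg _
    · exact ⟨s₁, hs₁mem, pow_pos (norm_pos_iff.mpr hds₁) 2⟩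
  have : (0:ℝ) < 1 / 4 := by norm_num
  exact mul_pos (mul_pos this hI1) hI2
end
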